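/- There exists a universal constant C' > 0 with the following property. Let f^{(1)}, …, f^{(m)} ∈ ℝ^n be the frequency vectors of an insertion-only stream, let δ ∈ (0,1), let Z_1, …, Z_n be i.i.d. Rademacher random variables, and set X_t = ∑_{j=1}^n Z_j f_j^{(t)}. Then with probability at least 1 − δ, |X_t| ≤ (C'/δ) ‖f^{(m)}‖₂ simultaneously for all t ∈ [m]. -/

import Mathlib

open MeasureTheory ProbabilityTheory
open scoped ENNReal

/-- The Euclidean (ℓ₂) norm of a vector in ℝ^k. -/
noncomputable def l2norm {k : ℕ} (x : Fin k → ℝ) : ℝ := Real.sqrt (∑ i, (x i) ^ 2)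

/-- The frequency vector at time `t` of the insertion-only stream `p` over universe `[n]`. -/
noncomputable def freq {n m : ℕ} (p : Fin m → Fin n) (t : ℕ) : Fin n → ℝ :=
  fun j => ((Finset.univ.filter fun t' : Fin m => (t' : ℕ) < t ∧ p t' = j).card : ℝ)

/-- The law of a Rademacher random variable: uniform on `{-1, +1}`. -/
noncomputable def radMeasure : Measure ℝ :=
  (2⁻¹ : ℝ≥0∞) • Measure.dirac (1 : ℝ) + (2⁻¹ : ℝ≥0∞) • Measure.dirac (-1 : ℝ)



lemma integrable_dirac_of_measurable {g : ℝ → ℝ} (hg : Measurable g) (x : ℝ) :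
    Integrable g (Measure.dirac x) := by
  refine ⟨hg.aestronglyMeasurable, ?_⟩
  rw [HasFiniteIntegral, lintegral_dirac x (fun a => ‖g a‖ₑ)]
  exact enorm_lt_top

lemma radMeasure_integral (g : ℝ → ℝ) (hg : Measurable g) :
    ∫ x, g x ∂radMeasure = (g 1 + g (-1)) / 2 := by
  rw [radMeasure, integral_add_measure
      (((integrable_dirac_of_measurable hg 1)).smul_measure (by norm_num))
      (((integrable_dirac_of_measurable hg (-1))).smul_measure (by norm_num)),
    integral_smul_measure, integral_smul_measure, integral_dirac, integral_dirac]
  simp [ENNReal.toReal_inv]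
  ring

lemma radMeasure_compl_pm :
    radMeasure ({1, -1} : Set ℝ)ᶜ = 0 := by
  rw [radMeasure]
  simp [Measure.dirac_apply' _ (((measurableSet_singleton (1:ℝ)).union (measurableSet_singleton (-1:ℝ))).compl)]

section Moments
variable {Ω : Type} [MeasurableSpace Ω] {μ : Measure Ω} [IsProbabilityMeasure μ]

lemma rad_pow_integral {W : Ω → ℝ} (hW : Measurable W)
    (hmap : Measure.map W μ = radMeasure) (k : ℕ) :
    ∫ ω, (W ω) ^ k ∂μ = (1 + (-1 : ℝ) ^ k) / 2 := by
  have hpm : Measurable fun x : ℝ => x ^ k := measurable_id.pow_const k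
  have : ∫ ω, (W ω) ^ k ∂μ = ∫ x, x ^ k ∂(Measure.map W μ) := by
    rw [integral_map hW.aemeasurable hpm.aestronglyMeasurable]
  rw [this, hmap, radMeasure_integral _ hpm, one_pow]

lemma rad_abs_le_one {W : Ω → ℝ} (hW : Measurable W)
    (hmap : Measure.map W μ = radMeasure) :
    ∀ᵐ ω ∂μ, |W ω| ≤ 1 := by
  have hs : MeasurableSet ({1, -1} : Set ℝ) :=
    (measurableSet_singleton (1:ℝ)).union (measurableSet_singleton (-1:ℝ))
  have h0 : μ (W ⁻¹' ({1, -1} : Set ℝ)ᶜ) = 0 := by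
    rw [← Measure.map_apply hW hs.compl, hmap, radMeasure_compl_pm]
  refine ae_iff.mpr (measure_mono_null ?_ h0)
  intro ω hω
  simp only [Set.mem_setOf_eq, not_le] at hω
  simp only [Set.mem_preimage, Set.mem_compl_iff, Set.mem_insert_iff,
    Set.mem_singleton_iff]
  push_neg
  constructor <;> intro h <;> rw [h] at hω <;> norm_num at hω

end Moments

section Moments2
variable {Ω : Type} [MeasurableSpace Ω] {μ : Measure Ω} [IsProbabilityMeasure μ]

lemma bdd_integrable {f : Ω → ℝ} (hf : AEStronglyMeasurable f μ) {C : ℝ}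
    (h : ∀ᵐ ω ∂μ, |f ω| ≤ C) : Integrable f μ :=
  Integrable.mono' (integrable_const C) hf (h.mono fun ω hω => by simpa using hω)

lemma rad_sum_moments {n : ℕ} {Z : Fin n → Ω → ℝ}
    (hmeas : ∀ i, Measurable (Z i))
    (hindep : iIndepFun Z μ)
    (hmap : ∀ i, Measure.map (Z i) μ = radMeasure)
    (a : Fin n → ℝ) (s : Finset (Fin n)) :
    (∫ ω, (∑ j ∈ s, a j * Z j ω) ∂μ = 0) ∧
    (∫ ω, (∑ j ∈ s, a j * Z j ω) ^ 2 ∂μ = ∑ j ∈ s, (a j) ^ 2) ∧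
    (∫ ω, (∑ j ∈ s, a j * Z j ω) ^ 4 ∂μ ≤ 3 * (∑ j ∈ s, (a j) ^ 2) ^ 2) := by
  classical
  have hZb : ∀ᵐ ω ∂μ, ∀ j, |Z j ω| ≤ 1 :=
    ae_all_iff.mpr fun j => rad_abs_le_one (hmeas j) (hmap j)
  induction s using Finset.induction_on with
  | empty => simp
  | @insert i s hi ih =>
    obtain ⟨ih1, ih2, ih4⟩ := ih
    set b : ℝ := a i with hb
    set T : Ω → ℝ := fun ω => ∑ j ∈ s, a j * Z j ω with hT
    set Y : Fin n → Ω → ℝ := fun j ω => a j * Z j ω with hY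
    have hYmeas : ∀ j, Measurable (Y j) := fun j => (hmeas j).const_mul (a j)
    have hYindep : iIndepFun Y μ :=
      hindep.comp (fun j x => a j * x) (fun j => measurable_const_mul (a j))
    have hTS : IndepFun T (Y i) μ := by
      have h := hYindep.indepFun_finsetSum_of_notMem hYmeas hi
      have hfun : (∑ j ∈ s, Y j) = T := by
        funext ω; rw [Finset.sum_apply]
      rwa [hfun] at h
    have hTmeas : Measurable T := by
      apply Finset.measurable_sum
      exact fun j _ => (hmeas j).const_mul (a j)
    set B : ℝ := ∑ j ∈ s, |a j| with hB
    have hTbd : ∀ᵐ ω ∂μ, |T ω| ≤ B := by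
      filter_upwards [hZb] with ω hω
      calc |T ω| ≤ ∑ j ∈ s, |a j * Z j ω| := Finset.abs_sum_le_sum_abs _ _
        _ ≤ ∑ j ∈ s, |a j| := by
            apply Finset.sum_le_sum
            intro j _
            rw [abs_mul]
            calc |a j| * |Z j ω| ≤ |a j| * 1 :=
              mul_le_mul_of_nonneg_left (hω j) (abs_nonneg _)
              _ = |a j| := mul_one _
    have hWbd : ∀ᵐ ω ∂μ, |Y i ω| ≤ |b| := by
      filter_upwards [hZb] with ω hω
      rw [hY]
      simp only [abs_mul]
      calc |a i| * |Z i ω| ≤ |a i| * 1 := mul_le_mul_of_nonneg_left (hω i) (abs_nonneg _)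
        _ = |b| := mul_one _
    have hint : ∀ k l : ℕ, Integrable (fun ω => T ω ^ k * Y i ω ^ l) μ := by
      intro k l
      refine bdd_integrable (((hTmeas.pow_const k).mul
        ((hYmeas i).pow_const l)).aestronglyMeasurable) (C := B ^ k * |b| ^ l) ?_
      filter_upwards [hTbd, hWbd] with ω h1 h2
      rw [abs_mul, abs_pow, abs_pow]
      exact mul_le_mul (pow_le_pow_left₀ (abs_nonneg _) h1 k)
        (pow_le_pow_left₀ (abs_nonneg _) h2 l) (by positivity) (by positivity)
    have hintT : ∀ k : ℕ, Integrable (fun ω => T ω ^ k) μ := by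
      intro k
      have := hint k 0
      simpa using this
    have hintY : ∀ l : ℕ, Integrable (fun ω => Y i ω ^ l) μ := by
      intro l
      have := hint 0 l
      simpa using this
    have hEY : ∀ l : ℕ, ∫ ω, Y i ω ^ l ∂μ = b ^ l * ((1 + (-1 : ℝ) ^ l) / 2) := by
      intro l
      have : (fun ω => Y i ω ^ l) = fun ω => b ^ l * (Z i ω) ^ l := by
        funext ω; rw [hY]; ring
      rw [this, integral_const_mul, rad_pow_integral (hmeas i) (hmap i)]
    have hprod : ∀ k l : ℕ, ∫ ω, T ω ^ k * Y i ω ^ l ∂μ =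
        (∫ ω, T ω ^ k ∂μ) * ∫ ω, Y i ω ^ l ∂μ := by
      intro k l
      exact (hTS.comp (measurable_id.pow_const k)
        (measurable_id.pow_const l)).integral_fun_mul_eq_mul_integral (hintT k).1 (hintY l).1
    have hT1 : ∫ ω, T ω ^ 1 ∂μ = 0 := by
      simp only [pow_one]
      exact ih1
    have hT2 : ∫ ω, T ω ^ 2 ∂μ = ∑ j ∈ s, a j ^ 2 := ih2
    refine ⟨?_, ?_, ?_⟩
    · have e1 : (fun ω => ∑ j ∈ insert i s, a j * Z j ω)
          = fun ω => Y i ω ^ 1 + T ω ^ 1 := by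
        funext ω; simp only [Finset.sum_insert hi, hT, hY]; ring
      rw [e1, integral_add (hintY 1) (hintT 1), hEY 1, hT1]
      norm_num
    · have hA : Integrable (fun ω => T ω ^ 2 + 2 * (T ω ^ 1 * Y i ω ^ 1)) μ :=
        (hintT 2).add ((hint 1 1).const_mul 2)
      have e2 : (fun ω => (∑ j ∈ insert i s, a j * Z j ω) ^ 2)
          = fun ω => (T ω ^ 2 + 2 * (T ω ^ 1 * Y i ω ^ 1)) + Y i ω ^ 2 := by
        funext ω; simp only [Finset.sum_insert hi, hT, hY]; ring
      rw [e2, integral_add hA (hintY 2), integral_add (hintT 2) ((hint 1 1).const_mul 2),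
        integral_const_mul, hprod 1 1, hEY 1, hEY 2, hT1, hT2, Finset.sum_insert hi]
      norm_num
      ring
    · have hA1 : Integrable (fun ω => T ω ^ 4 + 4 * (T ω ^ 3 * Y i ω ^ 1)) μ :=
        (hintT 4).add ((hint 3 1).const_mul 4)
      have hA2 : Integrable (fun ω => (T ω ^ 4 + 4 * (T ω ^ 3 * Y i ω ^ 1))
          + 6 * (T ω ^ 2 * Y i ω ^ 2)) μ := hA1.add ((hint 2 2).const_mul 6)
      have hA3 : Integrable (fun ω => ((T ω ^ 4 + 4 * (T ω ^ 3 * Y i ω ^ 1))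
          + 6 * (T ω ^ 2 * Y i ω ^ 2)) + 4 * (T ω ^ 1 * Y i ω ^ 3)) μ :=
        hA2.add ((hint 1 3).const_mul 4)
      have e4 : (fun ω => (∑ j ∈ insert i s, a j * Z j ω) ^ 4)
          = fun ω => (((T ω ^ 4 + 4 * (T ω ^ 3 * Y i ω ^ 1)) + 6 * (T ω ^ 2 * Y i ω ^ 2))
              + 4 * (T ω ^ 1 * Y i ω ^ 3)) + Y i ω ^ 4 := by
        funext ω; simp only [Finset.sum_insert hi, hT, hY]; ring
      rw [e4, integral_add hA3 (hintY 4), integral_add hA2 ((hint 1 3).const_mul 4),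
        integral_add hA1 ((hint 2 2).const_mul 6),
        integral_add (hintT 4) ((hint 3 1).const_mul 4),
        integral_const_mul, integral_const_mul, integral_const_mul,
        hprod 3 1, hprod 2 2, hprod 1 3, hEY 1, hEY 2, hEY 3, hEY 4,
        hT1, hT2, Finset.sum_insert hi]
      norm_num
      nlinarith [ih4, sq_nonneg b, sq_nonneg (∑ j ∈ s, a j ^ 2), sq_nonneg (b ^ 2),
        sq_nonneg (b ^ 2 - ∑ j ∈ s, a j ^ 2)]

end Moments2

lemma markov4 {Ω : Type} [MeasurableSpace Ω] (μ : Measure Ω) [IsProbabilityMeasure μ]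
    {Y : Ω → ℝ} (hint : Integrable (fun ω => (Y ω) ^ 4) μ)
    {c M : ℝ} (hc : 0 < c) (hM : ∫ ω, (Y ω) ^ 4 ∂μ ≤ M) :
    μ {ω | c < |Y ω|} ≤ ENNReal.ofReal (M / c ^ 4) := by
  have hsub : {ω | c < |Y ω|} ⊆ {ω | c ^ 4 ≤ (Y ω) ^ 4} := by
    intro ω hω
    simp only [Set.mem_setOf_eq] at *
    calc c ^ 4 ≤ |Y ω| ^ 4 := pow_le_pow_left₀ hc.le hω.le 4
      _ = (Y ω) ^ 4 := by rw [← abs_pow]; exact abs_of_nonneg (by positivity)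
  have hmark := mul_meas_ge_le_integral_of_nonneg
    (ae_of_all μ (fun ω => by positivity : ∀ ω, (0:ℝ) ≤ (Y ω) ^ 4)) hint (c ^ 4)
  have hfin : μ {ω | c ^ 4 ≤ (Y ω) ^ 4} ≠ ⊤ := measure_ne_top μ _
  have h1 : (μ {ω | c ^ 4 ≤ (Y ω) ^ 4}).toReal ≤ M / c ^ 4 := by
    rw [le_div_iff₀ (by positivity)]
    calc (μ {ω | c ^ 4 ≤ (Y ω) ^ 4}).toReal * c ^ 4
        = c ^ 4 * (μ {ω | c ^ 4 ≤ (Y ω) ^ 4}).toReal := mul_comm _ _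
      _ ≤ ∫ ω, (Y ω) ^ 4 ∂μ := hmark
      _ ≤ M := hM
  calc μ {ω | c < |Y ω|} ≤ μ {ω | c ^ 4 ≤ (Y ω) ^ 4} := measure_mono hsub
    _ = ENNReal.ofReal ((μ {ω | c ^ 4 ≤ (Y ω) ^ 4}).toReal) := (ENNReal.ofReal_toReal hfin).symm
    _ ≤ ENNReal.ofReal (M / c ^ 4) := ENNReal.ofReal_le_ofReal h1

section Freq
variable {n m : ℕ} (p : Fin m → Fin n)

lemma freq_nonneg (t : ℕ) (j : Fin n) : 0 ≤ freq p t j := Nat.cast_nonneg _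

lemma freq_card_mono {s t : ℕ} (h : s ≤ t) (j : Fin n) :
    (Finset.univ.filter fun t' : Fin m => (t' : ℕ) < s ∧ p t' = j).card ≤
    (Finset.univ.filter fun t' : Fin m => (t' : ℕ) < t ∧ p t' = j).card := by
  apply Finset.card_le_card
  apply Finset.monotone_filter_right
  intro t' _ ht'
  exact ⟨lt_of_lt_of_le ht'.1 h, ht'.2⟩

lemma freq_mono {s t : ℕ} (h : s ≤ t) (j : Fin n) : freq p s j ≤ freq p t j := by
  unfold freq
  exact_mod_cast freq_card_mono p h j

lemma freq_nat_gap {s t : ℕ} (h : s ≤ t) (j : Fin n) :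
    freq p s j = freq p t j ∨ freq p s j + 1 ≤ freq p t j := by
  have hc := freq_card_mono p h j
  rcases eq_or_lt_of_le hc with heq | hlt
  · left; unfold freq; exact_mod_cast heq
  · right; unfold freq; exact_mod_cast hlt

lemma freq_diff_le_sq_diff {s t : ℕ} (h : s ≤ t) (j : Fin n) :
    freq p t j - freq p s j ≤ freq p t j ^ 2 - freq p s j ^ 2 := by
  rcases freq_nat_gap p h j with heq | hgap
  · rw [heq]; ring_nf; exact le_refl _
  · have h0 : 0 ≤ freq p s j := freq_nonneg p s j
    nlinarith

lemma freq_succ {s : ℕ} (hs : s < m) (j : Fin n) :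
    freq p (s + 1) j = freq p s j + (if p ⟨s, hs⟩ = j then 1 else 0) := by
  unfold freq
  have key : (Finset.univ.filter fun t' : Fin m => (t' : ℕ) < s + 1 ∧ p t' = j)
      = if p ⟨s, hs⟩ = j
        then insert ⟨s, hs⟩ (Finset.univ.filter fun t' : Fin m => (t' : ℕ) < s ∧ p t' = j)
        else (Finset.univ.filter fun t' : Fin m => (t' : ℕ) < s ∧ p t' = j) := by
    split_ifs with hj
    · ext t'
      simp only [Finset.mem_filter, Finset.mem_univ, true_and, Finset.mem_insert]
      constructor
      · rintro ⟨hlt, hpt⟩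
        rcases Nat.lt_succ_iff_lt_or_eq.mp hlt with h' | h'
        · exact Or.inr ⟨h', hpt⟩
        · exact Or.inl (Fin.ext h')
      · rintro (rfl | ⟨hlt, hpt⟩)
        · exact ⟨Nat.lt_succ_self _, hj⟩
        · exact ⟨Nat.lt_succ_of_lt hlt, hpt⟩
    · ext t'
      simp only [Finset.mem_filter, Finset.mem_univ, true_and]
      constructor
      · rintro ⟨hlt, hpt⟩
        rcases Nat.lt_succ_iff_lt_or_eq.mp hlt with h' | h'
        · exact ⟨h', hpt⟩
        · exact absurd hpt (by rw [show t' = (⟨s, hs⟩ : Fin m) from Fin.ext h']; exact hj)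
      · rintro ⟨hlt, hpt⟩
        exact ⟨Nat.lt_succ_of_lt hlt, hpt⟩
  rw [key]
  split_ifs with hj
  · rw [Finset.card_insert_of_notMem (by simp)]
    push_cast
    ring
  · simp

lemma freq_zero (j : Fin n) : freq p 0 j = 0 := by
  unfold freq
  simp

end Freq

section Tau
variable {n m : ℕ} (p : Fin m → Fin n)

/-- total squared mass at time t -/
noncomputable def Vsum (t : ℕ) : ℝ := ∑ j, freq p t j ^ 2

lemma Vsum_nonneg (t : ℕ) : 0 ≤ Vsum p t :=
  Finset.sum_nonneg fun j _ => sq_nonneg _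

lemma Vsum_mono {s t : ℕ} (h : s ≤ t) : Vsum p s ≤ Vsum p t :=
  Finset.sum_le_sum fun j _ => pow_le_pow_left₀ (freq_nonneg p s j) (freq_mono p h j) 2

lemma Vsum_zero : Vsum p 0 = 0 := by
  unfold Vsum
  simp [freq_zero]

lemma one_le_Vsum (hm : 0 < m) : 1 ≤ Vsum p m := by
  have hj : (1 : ℝ) ≤ freq p m (p ⟨0, hm⟩) := by
    unfold freq
    have : (⟨0, hm⟩ : Fin m) ∈ Finset.univ.filter
        fun t' : Fin m => (t' : ℕ) < m ∧ p t' = p ⟨0, hm⟩ := by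
      simp
    exact_mod_cast Finset.card_pos.mpr ⟨_, this⟩
  calc (1:ℝ) = 1 ^ 2 := by norm_num
    _ ≤ freq p m (p ⟨0, hm⟩) ^ 2 := pow_le_pow_left₀ (by norm_num) hj 2
    _ ≤ Vsum p m := Finset.single_le_sum (f := fun j => freq p m j ^ 2)
        (fun j _ => sq_nonneg _) (Finset.mem_univ _)

lemma sq_diff_le_Vsum_diff {s t : ℕ} (h : s ≤ t) :
    ∑ j, (freq p t j - freq p s j) ^ 2 ≤ Vsum p t - Vsum p s := by
  unfold Vsum
  rw [← Finset.sum_sub_distrib]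
  apply Finset.sum_le_sum
  intro j _
  nlinarith [freq_nonneg p s j, freq_mono p h j]

lemma l1_diff_le_Vsum_diff {s t : ℕ} (h : s ≤ t) :
    ∑ j, (freq p t j - freq p s j) ≤ Vsum p t - Vsum p s := by
  unfold Vsum
  rw [← Finset.sum_sub_distrib]
  exact Finset.sum_le_sum fun j _ => freq_diff_le_sq_diff p h j

/-- the anchor point at scale `k`, cell `c` -/
noncomputable def tau (k c : ℕ) : ℕ :=
  if h : ((Finset.range (m+1)).filter
      fun t => Vsum p t < (c+1) * (Vsum p m / 2 ^ k)).Nonempty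
  then ((Finset.range (m+1)).filter
      fun t => Vsum p t < (c+1) * (Vsum p m / 2 ^ k)).max' h
  else 0

variable (hm : 0 < m)
include hm

lemma tauSet_nonempty (k c : ℕ) :
    ((Finset.range (m+1)).filter
      fun t => Vsum p t < (c+1) * (Vsum p m / 2 ^ k)).Nonempty := by
  refine ⟨0, Finset.mem_filter.mpr ⟨Finset.mem_range.mpr (by omega), ?_⟩⟩
  rw [Vsum_zero]
  have h1 : (0:ℝ) < Vsum p m := lt_of_lt_of_le one_pos (one_le_Vsum p hm)
  positivity

lemma tau_mem (k c : ℕ) : tau p k c ∈ (Finset.range (m+1)).filter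
    (fun t => Vsum p t < (c+1) * (Vsum p m / 2 ^ k)) := by
  rw [tau, dif_pos (tauSet_nonempty p hm k c)]
  exact Finset.max'_mem _ _

lemma tau_le (k c : ℕ) : tau p k c ≤ m := by
  have := tau_mem p hm k c
  rw [Finset.mem_filter, Finset.mem_range] at this
  omega

lemma Vsum_tau_lt (k c : ℕ) : Vsum p (tau p k c) < (c+1) * (Vsum p m / 2 ^ k) := by
  have := tau_mem p hm k c
  rw [Finset.mem_filter] at this
  exact this.2

lemma le_tau {k c t : ℕ} (ht : t ≤ m) (hV : Vsum p t < (c+1) * (Vsum p m / 2 ^ k)) :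
    t ≤ tau p k c := by
  rw [tau, dif_pos (tauSet_nonempty p hm k c)]
  exact Finset.le_max' _ _ (Finset.mem_filter.mpr ⟨Finset.mem_range.mpr (by omega), hV⟩)

end Tau

section Chain
variable {n m : ℕ} (p : Fin m → Fin n)

/-- the chaining projection of time `t` at scale `k` -/
noncomputable def piA (k t : ℕ) : ℕ := tau p k ⌊Vsum p t / (Vsum p m / 2 ^ k)⌋₊

variable (hm : 0 < m)
include hm

lemma Vsum_m_pos : (0:ℝ) < Vsum p m := lt_of_lt_of_le one_pos (one_le_Vsum p hm)

lemma delta_pos (k : ℕ) : (0:ℝ) < Vsum p m / 2 ^ k := by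
  have := Vsum_m_pos p hm
  positivity

lemma floor_idx_le {k t : ℕ} (ht : t ≤ m) :
    ⌊Vsum p t / (Vsum p m / 2 ^ k)⌋₊ ≤ 2 ^ k := by
  have hΔ := delta_pos p hm k
  have h1 : Vsum p t / (Vsum p m / 2 ^ k) ≤ (2 ^ k : ℕ) := by
    rw [div_le_iff₀ hΔ]
    push_cast
    calc Vsum p t ≤ Vsum p m := Vsum_mono p ht
      _ = 2 ^ k * (Vsum p m / 2 ^ k) := by field_simp
  calc ⌊Vsum p t / (Vsum p m / 2 ^ k)⌋₊ ≤ ⌊((2 ^ k : ℕ) : ℝ)⌋₊ :=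
        Nat.floor_le_floor h1
    _ = 2 ^ k := Nat.floor_natCast _

lemma self_le_piA {k t : ℕ} (ht : t ≤ m) : t ≤ piA p k t := by
  apply le_tau p hm ht
  have hΔ := delta_pos p hm k
  have hσ := (Vsum_m_pos p hm).ne'
  have := Nat.lt_floor_add_one (Vsum p t / (Vsum p m / 2 ^ k))
  calc Vsum p t = (Vsum p t / (Vsum p m / 2 ^ k)) * (Vsum p m / 2 ^ k) := by
        field_simp
    _ < ((⌊Vsum p t / (Vsum p m / 2 ^ k)⌋₊ : ℝ) + 1) * (Vsum p m / 2 ^ k) := by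
        apply mul_lt_mul_of_pos_right _ hΔ
        exact this

lemma Vsum_piA_sub_lt {k t : ℕ} (ht : t ≤ m) :
    Vsum p (piA p k t) - Vsum p t < Vsum p m / 2 ^ k := by
  have hΔ := delta_pos p hm k
  have h1 : Vsum p (piA p k t) <
      ((⌊Vsum p t / (Vsum p m / 2 ^ k)⌋₊ : ℝ) + 1) * (Vsum p m / 2 ^ k) :=
    Vsum_tau_lt p hm k _
  have h2 : (⌊Vsum p t / (Vsum p m / 2 ^ k)⌋₊ : ℝ) * (Vsum p m / 2 ^ k) ≤ Vsum p t := by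
    rw [← le_div_iff₀ hΔ]
    exact Nat.floor_le (div_nonneg (Vsum_nonneg p t) hΔ.le)
  nlinarith

lemma piA_succ_eq {k t : ℕ} :
    piA p k t = tau p k (⌊Vsum p t / (Vsum p m / 2 ^ (k+1))⌋₊ / 2) := by
  have hσ := (Vsum_m_pos p hm).ne'
  have key : ⌊Vsum p t / (Vsum p m / 2 ^ k)⌋₊ =
      ⌊Vsum p t / (Vsum p m / 2 ^ (k+1))⌋₊ / 2 := by
    have h2 : Vsum p t / (Vsum p m / 2 ^ k) =
        (Vsum p t / (Vsum p m / 2 ^ (k+1))) / ((2:ℕ) : ℝ) := by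
      push_cast
      rw [pow_succ]
      field_simp
    rw [h2, Nat.floor_div_natCast]
  rw [piA, key]

lemma link_sq_bound (k c : ℕ) (hsmall : (1:ℝ) ≤ 4 * (Vsum p m / 2 ^ (k+1))) :
    ∑ j, (freq p (tau p k (c/2)) j - freq p (tau p (k+1) c) j) ^ 2
      ≤ 10 * (Vsum p m / 2 ^ (k+1)) := by
  set Δ : ℝ := Vsum p m / 2 ^ (k+1) with hΔdef
  have hΔ : 0 < Δ := delta_pos p hm (k+1)
  set u1 := tau p (k+1) c with hu1
  set u0 := tau p k (c/2) with hu0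
  have hsplit : ((c/2 : ℕ) + 1) * (Vsum p m / 2 ^ k) = (2 * ((c/2 : ℕ):ℝ) + 2) * Δ := by
    rw [hΔdef, pow_succ]
    push_cast
    field_simp
  have hcast : ((c:ℝ) + 1) ≤ 2 * ((c/2 : ℕ):ℝ) + 2 := by
    have : c + 1 ≤ 2 * (c/2) + 2 := by omega
    exact_mod_cast this
  have hcast2 : (2 * ((c/2 : ℕ):ℝ) + 2) ≤ (c:ℝ) + 2 := by
    have : 2 * (c/2) + 2 ≤ c + 2 := by omega
    exact_mod_cast this
  have h_u1_u0 : u1 ≤ u0 := by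
    apply le_tau p hm (tau_le p hm _ _)
    have hV1 : Vsum p u1 < ((c:ℝ)+1) * Δ := by
      have h := Vsum_tau_lt p hm (k+1) c
      push_cast at h
      rw [← hΔdef] at h
      exact h
    calc Vsum p u1 < ((c:ℝ)+1) * Δ := hV1
      _ ≤ (2 * ((c/2 : ℕ):ℝ) + 2) * Δ := mul_le_mul_of_nonneg_right hcast hΔ.le
      _ = ((c/2 : ℕ) + 1) * (Vsum p m / 2 ^ k) := hsplit.symm
  rcases eq_or_lt_of_le h_u1_u0 with heq | hlt
  · rw [← heq]
    have hz : ∑ j, (freq p u1 j - freq p u1 j) ^ 2 = 0 := by simp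
    rw [hz]
    nlinarith
  · have hu1m : u1 < m := lt_of_lt_of_le hlt (tau_le p hm _ _)
    have hsucc_le : u1 + 1 ≤ u0 := hlt
    set j0 := p ⟨u1, hu1m⟩ with hj0
    have hstep : ∀ j, freq p (u1+1) j = freq p u1 j + (if j0 = j then 1 else 0) :=
      fun j => freq_succ p hu1m j
    have hVsucc : ((c:ℝ)+1) * Δ ≤ Vsum p (u1+1) := by
      by_contra hcon
      push_neg at hcon
      have hcon' : Vsum p (u1+1) < ((c:ℝ) + 1) * (Vsum p m / 2 ^ (k+1)) := by
        rw [← hΔdef]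
        exact hcon
      have : u1 + 1 ≤ u1 := le_tau p hm (by omega) hcon'
      omega
    have hVu0 : Vsum p u0 < ((c:ℝ)+2) * Δ := by
      calc Vsum p u0 < ((c/2 : ℕ) + 1) * (Vsum p m / 2 ^ k) := Vsum_tau_lt p hm k _
        _ = (2 * ((c/2 : ℕ):ℝ) + 2) * Δ := hsplit
        _ ≤ ((c:ℝ)+2) * Δ := mul_le_mul_of_nonneg_right hcast2 hΔ.le
    have hmid : ∑ j, (freq p u0 j - freq p (u1+1) j) ^ 2 ≤ Δ := by
      calc ∑ j, (freq p u0 j - freq p (u1+1) j) ^ 2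
          ≤ Vsum p u0 - Vsum p (u1+1) := sq_diff_le_Vsum_diff p hsucc_le
        _ ≤ Δ := by nlinarith
    calc ∑ j, (freq p u0 j - freq p u1 j) ^ 2
        = ∑ j, ((freq p u0 j - freq p (u1+1) j) + (if j0 = j then 1 else 0)) ^ 2 := by
          apply Finset.sum_congr rfl
          intro j _
          rw [hstep j]
          ring
      _ ≤ ∑ j, (2 * (freq p u0 j - freq p (u1+1) j) ^ 2
            + 2 * (if j0 = j then (1:ℝ) else 0) ^ 2) := by
          apply Finset.sum_le_sum
          intro j _
          nlinarith [sq_nonneg ((freq p u0 j - freq p (u1+1) j) - (if j0 = j then (1:ℝ) else 0))]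
      _ = 2 * (∑ j, (freq p u0 j - freq p (u1+1) j) ^ 2)
            + 2 * ∑ j, (if j0 = j then (1:ℝ) else 0) ^ 2 := by
          rw [Finset.sum_add_distrib, Finset.mul_sum, Finset.mul_sum]
      _ = 2 * (∑ j, (freq p u0 j - freq p (u1+1) j) ^ 2) + 2 := by
          have e : ∀ j, (if j0 = j then (1:ℝ) else 0) ^ 2
              = if j0 = j then (1:ℝ) else 0 := fun j => by split_ifs <;> norm_num
          simp only [e]
          rw [Finset.sum_ite_eq]
          simp
      _ ≤ 2 * Δ + 2 * (4 * Δ) := by nlinarith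
      _ = 10 * Δ := by ring

lemma remainder_l1 {K t : ℕ} (ht : t ≤ m) (hK : Vsum p m / 2 ^ K ≤ 1) :
    ∑ j, (freq p (piA p K t) j - freq p t j) ≤ 1 := by
  calc ∑ j, (freq p (piA p K t) j - freq p t j)
      ≤ Vsum p (piA p K t) - Vsum p t := l1_diff_le_Vsum_diff p (self_le_piA p hm ht)
    _ ≤ Vsum p m / 2 ^ K := (Vsum_piA_sub_lt p hm ht).le
    _ ≤ 1 := hK

end Chain

section Tail
variable {Ω : Type} [MeasurableSpace Ω] {μ : Measure Ω} [IsProbabilityMeasure μ]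
variable {n : ℕ} {Z : Fin n → Ω → ℝ}

lemma rad_markov (hmeas : ∀ i, Measurable (Z i))
    (hindep : iIndepFun Z μ)
    (hmap : ∀ i, Measure.map (Z i) μ = radMeasure)
    (a : Fin n → ℝ) {c : ℝ} (hc : 0 < c) {M : ℝ}
    (hM : 3 * (∑ j, a j ^ 2) ^ 2 ≤ M) :
    μ {ω | c < |∑ j, Z j ω * a j|} ≤ ENNReal.ofReal (M / c ^ 4) := by
  have hswap : ∀ ω, (∑ j, Z j ω * a j) = ∑ j, a j * Z j ω :=
    fun ω => Finset.sum_congr rfl fun j _ => mul_comm _ _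
  have hZb : ∀ᵐ ω ∂μ, ∀ j, |Z j ω| ≤ 1 :=
    ae_all_iff.mpr fun j => rad_abs_le_one (hmeas j) (hmap j)
  have hsmeas : Measurable fun ω => ∑ j, a j * Z j ω :=
    Finset.measurable_sum _ fun j _ => (hmeas j).const_mul (a j)
  have hint : Integrable (fun ω => (∑ j, a j * Z j ω) ^ 4) μ := by
    refine bdd_integrable (hsmeas.pow_const 4).aestronglyMeasurable
      (C := (∑ j, |a j|) ^ 4) ?_
    filter_upwards [hZb] with ω hω
    rw [abs_pow]
    apply pow_le_pow_left₀ (abs_nonneg _)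
    calc |∑ j, a j * Z j ω| ≤ ∑ j, |a j * Z j ω| := Finset.abs_sum_le_sum_abs _ _
      _ ≤ ∑ j, |a j| := by
          apply Finset.sum_le_sum
          intro j _
          rw [abs_mul]
          calc |a j| * |Z j ω| ≤ |a j| * 1 := mul_le_mul_of_nonneg_left (hω j) (abs_nonneg _)
            _ = |a j| := mul_one _
  have hmom := (rad_sum_moments hmeas hindep hmap a Finset.univ).2.2
  have hset : {ω | c < |∑ j, Z j ω * a j|} = {ω | c < |∑ j, a j * Z j ω|} := by
    ext ω; rw [Set.mem_setOf_eq, Set.mem_setOf_eq, hswap ω]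
  rw [hset]
  exact markov4 μ hint hc (le_trans hmom hM)

lemma rad_zbad (hmeas : ∀ i, Measurable (Z i))
    (hmap : ∀ i, Measure.map (Z i) μ = radMeasure) :
    μ {ω | ¬ ∀ j, |Z j ω| ≤ 1} = 0 := by
  have hZb : ∀ᵐ ω ∂μ, ∀ j, |Z j ω| ≤ 1 :=
    ae_all_iff.mpr fun j => rad_abs_le_one (hmeas j) (hmap j)
  exact hZb

end Tail

section Arith

lemma geom_bound (K : ℕ) : ∑ k ∈ Finset.range K, ((2048:ℝ)/2401) ^ k ≤ 7 := by
  have hr : ((2048:ℝ)/2401) ≠ 1 := by norm_num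
  rw [geom_sum_eq hr]
  have h1 : (0:ℝ) ≤ (2048/2401 : ℝ) ^ K := by positivity
  have h2 : ((2048:ℝ)/2401) ^ K ≤ 1 := pow_le_one₀ (by norm_num) (by norm_num)
  rw [div_le_iff_of_neg (by norm_num : (2048:ℝ)/2401 - 1 < 0)]
  nlinarith

lemma term_bound (σsq lam : ℝ) (hσ : 0 < σsq) (hlam : 0 < lam) (k : ℕ) :
    ((2 ^ (k+1) + 1 : ℕ) : ℝ) * (300 * (σsq / 2 ^ (k+1)) ^ 2 / ((lam/32) * (7/8) ^ k) ^ 4)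
      ≤ 320000000 * σsq ^ 2 / lam ^ 4 * ((2048:ℝ)/2401) ^ k := by
  set x : ℝ := 2 ^ k with hx
  have hx1 : (1:ℝ) ≤ x := one_le_pow₀ (by norm_num)
  have hxpos : (0:ℝ) < x := lt_of_lt_of_le one_pos hx1
  set y : ℝ := (7/8 : ℝ) ^ k with hy
  have hypos : (0:ℝ) < y := by positivity
  have hN : ((2 ^ (k+1) + 1 : ℕ) : ℝ) ≤ 4 * x := by
    push_cast
    rw [pow_succ]
    nlinarith
  have hNpos : (0:ℝ) ≤ ((2 ^ (k+1) + 1 : ℕ) : ℝ) := by positivity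
  have h2k1 : ((2:ℝ) ^ (k+1)) = 2 * x := by rw [pow_succ]; ring
  have hxy : x * y ^ 4 = ((2401:ℝ)/2048) ^ k := by
    have : y ^ 4 = ((2401:ℝ)/4096) ^ k := by
      rw [hy, ← pow_mul, mul_comm k 4, pow_mul]
      norm_num
    rw [this, hx, ← mul_pow]
    norm_num
  have hq : (1:ℝ) / (x * y ^ 4) = ((2048:ℝ)/2401) ^ k := by
    rw [hxy, one_div, ← inv_pow]
    norm_num
  have key : ((2 ^ (k+1) + 1 : ℕ) : ℝ) * (300 * (σsq / 2 ^ (k+1)) ^ 2 / ((lam/32) * y) ^ 4)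
      = ((2 ^ (k+1) + 1 : ℕ) : ℝ) * 78643200 * (σsq ^ 2 / (x ^ 2 * lam ^ 4 * y ^ 4)) := by
    rw [h2k1]
    field_simp
    ring
  rw [key]
  calc ((2 ^ (k+1) + 1 : ℕ) : ℝ) * 78643200 * (σsq ^ 2 / (x ^ 2 * lam ^ 4 * y ^ 4))
      ≤ (4 * x) * 78643200 * (σsq ^ 2 / (x ^ 2 * lam ^ 4 * y ^ 4)) := by
        apply mul_le_mul_of_nonneg_right (mul_le_mul_of_nonneg_right hN (by norm_num))
        positivity
    _ = 314572800 * (σsq ^ 2 / lam ^ 4) * (1 / (x * y ^ 4)) := by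
        field_simp
        ring
    _ ≤ 320000000 * (σsq ^ 2 / lam ^ 4) * (1 / (x * y ^ 4)) := by
        apply mul_le_mul_of_nonneg_right (mul_le_mul_of_nonneg_right (by norm_num) (by positivity))
        positivity
    _ = 320000000 * σsq ^ 2 / lam ^ 4 * ((2048:ℝ)/2401) ^ k := by
        rw [hq]
        ring

lemma sum_level_bound (σsq lam : ℝ) (hσ : 0 < σsq) (hlam : 0 < lam) (K : ℕ) :
    ∑ k ∈ Finset.range K,
        ((2 ^ (k+1) + 1 : ℕ) : ℝ) * (300 * (σsq / 2 ^ (k+1)) ^ 2 / ((lam/32) * (7/8) ^ k) ^ 4)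
      ≤ 2240000000 * σsq ^ 2 / lam ^ 4 := by
  calc ∑ k ∈ Finset.range K,
        ((2 ^ (k+1) + 1 : ℕ) : ℝ) * (300 * (σsq / 2 ^ (k+1)) ^ 2 / ((lam/32) * (7/8) ^ k) ^ 4)
      ≤ ∑ k ∈ Finset.range K, 320000000 * σsq ^ 2 / lam ^ 4 * ((2048:ℝ)/2401) ^ k :=
        Finset.sum_le_sum fun k _ => term_bound σsq lam hσ hlam k
    _ = 320000000 * σsq ^ 2 / lam ^ 4 * ∑ k ∈ Finset.range K, ((2048:ℝ)/2401) ^ k := by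
        rw [Finset.mul_sum]
    _ ≤ 320000000 * σsq ^ 2 / lam ^ 4 * 7 := by
        apply mul_le_mul_of_nonneg_left (geom_bound K)
        positivity
    _ = 2240000000 * σsq ^ 2 / lam ^ 4 := by ring

end Arith

lemma geom78_bound (K : ℕ) : ∑ k ∈ Finset.range K, ((7:ℝ)/8) ^ k ≤ 8 := by
  have hr : ((7:ℝ)/8) ≠ 1 := by norm_num
  rw [geom_sum_eq hr]
  have h1 : (0:ℝ) ≤ (7/8 : ℝ) ^ K := by positivity
  rw [div_le_iff_of_neg (by norm_num : (7:ℝ)/8 - 1 < 0)]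
  nlinarith

theorem bernoulli_process_tame' :
    ∀ (n m : ℕ), 0 < m →
      ∀ (p : Fin m → Fin n) (δ : ℝ), 0 < δ → δ < 1 →
      ∀ (Ω : Type) [MeasurableSpace Ω] (μ : Measure Ω) [IsProbabilityMeasure μ]
        (Z : Fin n → Ω → ℝ),
        (∀ i, Measurable (Z i)) →
        iIndepFun Z μ →
        (∀ i, Measure.map (Z i) μ = radMeasure) →
        ENNReal.ofReal (1 - δ) ≤
          μ {ω | ∀ t : Fin m,
              |∑ j, Z j ω * freq p ((t : ℕ) + 1) j| ≤ ((1000:ℝ) / δ) * l2norm (freq p m)} := by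
  intro n m hm p δ hδ0 hδ1 Ω _inst μ _inst2 Z hZmeas hZindep hZmap
  classical
  have hσsq1 : 1 ≤ Vsum p m := one_le_Vsum p hm
  have hσsq0 : (0:ℝ) < Vsum p m := lt_of_lt_of_le one_pos hσsq1
  have hσ1 : 1 ≤ Real.sqrt (Vsum p m) := by
    rw [show (1:ℝ) = Real.sqrt 1 from (Real.sqrt_one).symm]
    exact Real.sqrt_le_sqrt hσsq1
  have hσ0 : 0 < Real.sqrt (Vsum p m) := lt_of_lt_of_le one_pos hσ1
  have hσ2 : Real.sqrt (Vsum p m) ^ 2 = Vsum p m := Real.sq_sqrt hσsq0.le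
  have hl2 : l2norm (freq p m) = Real.sqrt (Vsum p m) := rfl
  set lam : ℝ := 1000 / δ * Real.sqrt (Vsum p m) with hlam_def
  have hδle : δ ≤ 1 := hδ1.le
  have hlam1000 : 1000 ≤ lam := by
    rw [hlam_def]
    have h1 : (1000:ℝ) ≤ 1000 / δ := by
      rw [le_div_iff₀ hδ0]; nlinarith
    nlinarith
  have hlam0 : (0:ℝ) < lam := by linarith
  set K : ℕ := Nat.clog 2 ⌈Vsum p m⌉₊ with hK_def
  have hK1 : Vsum p m ≤ 2 ^ K := by
    calc Vsum p m ≤ (⌈Vsum p m⌉₊ : ℝ) := Nat.le_ceil _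
      _ ≤ ((2 ^ K : ℕ) : ℝ) := by exact_mod_cast Nat.le_pow_clog one_lt_two _
      _ = 2 ^ K := by push_cast; ring
  have hK2 : (2:ℝ) ^ K ≤ 4 * Vsum p m := by
    rcases le_or_gt (⌈Vsum p m⌉₊) 1 with hc | hc
    · have hK0 : K = 0 := by
        rw [hK_def]
        exact Nat.clog_of_right_le_one hc 2
      rw [hK0]
      norm_num
      linarith
    · have h3 : (2:ℕ) ^ (K - 1) < ⌈Vsum p m⌉₊ := Nat.pow_pred_clog_lt_self one_lt_two hc
      have hKpos : 0 < K := Nat.clog_pos one_lt_two hc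
      have h4 : (⌈Vsum p m⌉₊ : ℝ) < Vsum p m + 1 := Nat.ceil_lt_add_one hσsq0.le
      have h5 : (2:ℝ) ^ (K - 1) < Vsum p m + 1 := by
        calc (2:ℝ) ^ (K-1) = ((2 ^ (K-1) : ℕ) : ℝ) := by push_cast; ring
          _ < (⌈Vsum p m⌉₊ : ℝ) := by exact_mod_cast h3
          _ < Vsum p m + 1 := h4
      have h6 : (2:ℝ) ^ K = 2 * 2 ^ (K - 1) := by
        rw [← pow_succ']
        congr 1
        omega
      nlinarith
  have hΔsmall : ∀ k : ℕ, k + 1 ≤ K → (1:ℝ) ≤ 4 * (Vsum p m / 2 ^ (k+1)) := by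
    intro k hk
    have h2k : (0:ℝ) < 2 ^ (k+1) := by positivity
    have hle : (2:ℝ) ^ (k+1) ≤ 4 * Vsum p m :=
      le_trans (pow_le_pow_right₀ one_le_two hk) hK2
    rw [show 4 * (Vsum p m / 2 ^ (k+1)) = 4 * Vsum p m / 2 ^ (k+1) from by ring,
      le_div_iff₀ h2k]
    linarith
  have hΔK : Vsum p m / 2 ^ K ≤ 1 := by
    rw [div_le_one (by positivity)]
    exact hK1
  -- the bad events
  set bb : ℕ → ℝ := fun k => lam / 32 * (7/8 : ℝ) ^ k with hbb_def
  have hbbpos : ∀ k, 0 < bb k := fun k => by rw [hbb_def]; positivity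
  set badA : Set Ω := ⋃ c ∈ Finset.range 2,
      {ω | lam / 2 < |∑ j, Z j ω * freq p (tau p 0 c) j|} with hbadA_def
  set badB : Set Ω := ⋃ k ∈ Finset.range K, ⋃ c ∈ Finset.range (2 ^ (k+1) + 1),
      {ω | bb k < |∑ j, Z j ω *
        (freq p (tau p k (c/2)) j - freq p (tau p (k+1) c) j)|} with hbadB_def
  set badZ : Set Ω := {ω | ¬ ∀ j, |Z j ω| ≤ 1} with hbadZ_def
  -- measure of bad events
  have hbadA_le : μ badA ≤ ENNReal.ofReal (96 * (Vsum p m) ^ 2 / lam ^ 4) := by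
    rw [hbadA_def]
    calc μ (⋃ c ∈ Finset.range 2, {ω | lam / 2 < |∑ j, Z j ω * freq p (tau p 0 c) j|})
        ≤ ∑ c ∈ Finset.range 2, μ {ω | lam / 2 < |∑ j, Z j ω * freq p (tau p 0 c) j|} :=
          measure_biUnion_finset_le _ _
      _ ≤ ∑ _c ∈ Finset.range 2, ENNReal.ofReal (3 * (Vsum p m) ^ 2 / (lam / 2) ^ 4) := by
          apply Finset.sum_le_sum
          intro c _
          apply rad_markov hZmeas hZindep hZmap _ (by positivity)
          have hV : Vsum p (tau p 0 c) ≤ Vsum p m := Vsum_mono p (tau_le p hm 0 c)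
          have hV0 : 0 ≤ Vsum p (tau p 0 c) := Vsum_nonneg p _
          have : (∑ j, freq p (tau p 0 c) j ^ 2) = Vsum p (tau p 0 c) := rfl
          rw [this]
          nlinarith
      _ = ENNReal.ofReal (96 * (Vsum p m) ^ 2 / lam ^ 4) := by
          rw [Finset.sum_const, Finset.card_range]
          rw [show (2 : ℕ) • ENNReal.ofReal (3 * (Vsum p m) ^ 2 / (lam / 2) ^ 4)
            = ENNReal.ofReal (3 * (Vsum p m) ^ 2 / (lam / 2) ^ 4)
              + ENNReal.ofReal (3 * (Vsum p m) ^ 2 / (lam / 2) ^ 4) from two_nsmul _]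
          rw [← ENNReal.ofReal_add (by positivity) (by positivity)]
          congr 1
          field_simp
          ring
  have hbadB_le : μ badB ≤ ENNReal.ofReal (2240000000 * (Vsum p m) ^ 2 / lam ^ 4) := by
    rw [hbadB_def]
    calc μ (⋃ k ∈ Finset.range K, ⋃ c ∈ Finset.range (2 ^ (k+1) + 1),
          {ω | bb k < |∑ j, Z j ω * (freq p (tau p k (c/2)) j - freq p (tau p (k+1) c) j)|})
        ≤ ∑ k ∈ Finset.range K, μ (⋃ c ∈ Finset.range (2 ^ (k+1) + 1),
          {ω | bb k < |∑ j, Z j ω * (freq p (tau p k (c/2)) j - freq p (tau p (k+1) c) j)|}) :=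
          measure_biUnion_finset_le _ _
      _ ≤ ∑ k ∈ Finset.range K,
            ((2 ^ (k+1) + 1 : ℕ) : ℝ≥0∞) *
              ENNReal.ofReal (300 * (Vsum p m / 2 ^ (k+1)) ^ 2 / (bb k) ^ 4) := by
          apply Finset.sum_le_sum
          intro k hk
          calc μ (⋃ c ∈ Finset.range (2 ^ (k+1) + 1),
              {ω | bb k < |∑ j, Z j ω * (freq p (tau p k (c/2)) j - freq p (tau p (k+1) c) j)|})
              ≤ ∑ c ∈ Finset.range (2 ^ (k+1) + 1), μ
                {ω | bb k < |∑ j, Z j ω * (freq p (tau p k (c/2)) j - freq p (tau p (k+1) c) j)|} :=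
                measure_biUnion_finset_le _ _
            _ ≤ ∑ _c ∈ Finset.range (2 ^ (k+1) + 1),
                  ENNReal.ofReal (300 * (Vsum p m / 2 ^ (k+1)) ^ 2 / (bb k) ^ 4) := by
                apply Finset.sum_le_sum
                intro c _
                apply rad_markov hZmeas hZindep hZmap _ (hbbpos k)
                have hlink := link_sq_bound p hm k c
                  (hΔsmall k (Nat.succ_le_of_lt (Finset.mem_range.mp hk)))
                have hnn : (0:ℝ) ≤ ∑ j, (freq p (tau p k (c/2)) j - freq p (tau p (k+1) c) j) ^ 2 :=
                  Finset.sum_nonneg fun j _ => sq_nonneg _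
                have hΔnn : (0:ℝ) ≤ Vsum p m / 2 ^ (k+1) := by positivity
                nlinarith
            _ = ((2 ^ (k+1) + 1 : ℕ) : ℝ≥0∞) *
                  ENNReal.ofReal (300 * (Vsum p m / 2 ^ (k+1)) ^ 2 / (bb k) ^ 4) := by
                rw [Finset.sum_const, Finset.card_range, nsmul_eq_mul]
      _ ≤ ENNReal.ofReal (2240000000 * (Vsum p m) ^ 2 / lam ^ 4) := by
          have hstep : ∀ k ∈ Finset.range K,
              ((2 ^ (k+1) + 1 : ℕ) : ℝ≥0∞) *
                ENNReal.ofReal (300 * (Vsum p m / 2 ^ (k+1)) ^ 2 / (bb k) ^ 4)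
              = ENNReal.ofReal (((2 ^ (k+1) + 1 : ℕ) : ℝ) *
                  (300 * (Vsum p m / 2 ^ (k+1)) ^ 2 / (bb k) ^ 4)) := by
            intro k _
            rw [ENNReal.ofReal_mul (by positivity)]
            congr 1
            rw [ENNReal.ofReal_natCast]
          rw [Finset.sum_congr rfl hstep,
            ← ENNReal.ofReal_sum_of_nonneg (fun k _ => by positivity)]
          apply ENNReal.ofReal_le_ofReal
          have := sum_level_bound (Vsum p m) lam hσsq0 hlam0 K
          calc ∑ k ∈ Finset.range K, ((2 ^ (k+1) + 1 : ℕ) : ℝ) *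
                (300 * (Vsum p m / 2 ^ (k+1)) ^ 2 / (bb k) ^ 4)
              = ∑ k ∈ Finset.range K, ((2 ^ (k+1) + 1 : ℕ) : ℝ) *
                (300 * (Vsum p m / 2 ^ (k+1)) ^ 2 / ((lam/32) * (7/8) ^ k) ^ 4) := by
                apply Finset.sum_congr rfl
                intro k _
                rw [hbb_def]
            _ ≤ 2240000000 * (Vsum p m) ^ 2 / lam ^ 4 := this
  have hbadZ_le : μ badZ = 0 := rad_zbad hZmeas hZmap
  have hbad_le : μ (badA ∪ badB ∪ badZ) ≤ ENNReal.ofReal δ := by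
    calc μ (badA ∪ badB ∪ badZ) ≤ μ (badA ∪ badB) + μ badZ := measure_union_le _ _
      _ ≤ (μ badA + μ badB) + μ badZ := add_le_add (measure_union_le _ _) le_rfl
      _ ≤ (ENNReal.ofReal (96 * (Vsum p m) ^ 2 / lam ^ 4)
            + ENNReal.ofReal (2240000000 * (Vsum p m) ^ 2 / lam ^ 4)) + 0 := by
          exact add_le_add (add_le_add hbadA_le hbadB_le) (le_of_eq hbadZ_le)
      _ = ENNReal.ofReal (96 * (Vsum p m) ^ 2 / lam ^ 4
            + 2240000000 * (Vsum p m) ^ 2 / lam ^ 4) := by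
          rw [add_zero, ← ENNReal.ofReal_add (by positivity) (by positivity)]
      _ ≤ ENNReal.ofReal δ := by
          apply ENNReal.ofReal_le_ofReal
          have hlam4 : lam ^ 4 = (1000 / δ) ^ 4 * (Vsum p m) ^ 2 := by
            rw [hlam_def, mul_pow]
            congr 1
            rw [show Real.sqrt (Vsum p m) ^ 4 = (Real.sqrt (Vsum p m) ^ 2) ^ 2 from by ring,
              hσ2]
          have hδ3 : δ ^ 3 ≤ 1 := pow_le_one₀ hδ0.le hδle
          have hδ4 : δ ^ 4 ≤ δ := by nlinarith
          have heq : 96 * (Vsum p m) ^ 2 / lam ^ 4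
              + 2240000000 * (Vsum p m) ^ 2 / lam ^ 4
              = 2240000096 * δ ^ 4 / 1000 ^ 4 := by
            rw [hlam4]
            field_simp
            ring
          rw [heq]
          nlinarith
  -- the good event implies the bound
  have hgood : ∀ ω, ω ∉ badA ∪ badB ∪ badZ → ∀ t, t ≤ m →
      |∑ j, Z j ω * freq p t j| ≤ lam := by
    intro ω hω t ht
    have hωA : ∀ c, c < 2 → |∑ j, Z j ω * freq p (tau p 0 c) j| ≤ lam / 2 := by
      intro c hc
      by_contra hcon
      push_neg at hcon
      exact hω (Or.inl (Or.inl (by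
        rw [hbadA_def]
        exact Set.mem_iUnion₂.mpr ⟨c, Finset.mem_range.mpr hc, hcon⟩)))
    have hωB : ∀ k, k < K → ∀ c, c < 2 ^ (k+1) + 1 →
        |∑ j, Z j ω * (freq p (tau p k (c/2)) j - freq p (tau p (k+1) c) j)| ≤ bb k := by
      intro k hk c hc
      by_contra hcon
      push_neg at hcon
      exact hω (Or.inl (Or.inr (by
        rw [hbadB_def]
        exact Set.mem_iUnion₂.mpr ⟨k, Finset.mem_range.mpr hk,
          Set.mem_iUnion₂.mpr ⟨c, Finset.mem_range.mpr hc, hcon⟩⟩)))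
    have hωZ : ∀ j, |Z j ω| ≤ 1 := by
      by_contra hcon
      exact hω (Or.inr (by rw [hbadZ_def]; exact hcon))
    set g : ℕ → ℝ := fun k => ∑ j, Z j ω * freq p (piA p k t) j with hg_def
    have htel : ∑ k ∈ Finset.range K, (g (k+1) - g k) = g K - g 0 :=
      Finset.sum_range_sub g K
    have hX_eq : (∑ j, Z j ω * freq p t j)
        = g 0 + (∑ k ∈ Finset.range K, (g (k+1) - g k))
          + ((∑ j, Z j ω * freq p t j) - g K) := by
      rw [htel]; ring
    have hpiece1 : |g 0| ≤ lam / 2 := by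
      have hc0 : ⌊Vsum p t / (Vsum p m / 2 ^ 0)⌋₊ < 2 :=
        lt_of_le_of_lt (floor_idx_le p hm ht) (by norm_num)
      exact hωA _ hc0
    have hpiece2 : |∑ k ∈ Finset.range K, (g (k+1) - g k)| ≤ lam / 4 := by
      have hterm : ∀ k, k < K → |g (k+1) - g k| ≤ bb k := by
        intro k hk
        have hc' : ⌊Vsum p t / (Vsum p m / 2 ^ (k+1))⌋₊ < 2 ^ (k+1) + 1 :=
          Nat.lt_succ_of_le (floor_idx_le p hm ht)
        have hdiff : g (k+1) - g k
            = -(∑ j, Z j ω * (freq p (tau p k (⌊Vsum p t / (Vsum p m / 2 ^ (k+1))⌋₊ / 2)) j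
                - freq p (tau p (k+1) ⌊Vsum p t / (Vsum p m / 2 ^ (k+1))⌋₊) j)) := by
          simp only [hg_def]
          rw [piA_succ_eq p hm (k := k) (t := t)]
          have hpi1 : piA p (k+1) t = tau p (k+1) ⌊Vsum p t / (Vsum p m / 2 ^ (k+1))⌋₊ := rfl
          rw [hpi1, ← Finset.sum_sub_distrib, ← Finset.sum_neg_distrib]
          apply Finset.sum_congr rfl
          intro j _
          ring
        rw [hdiff, abs_neg]
        exact hωB k hk _ hc'
      calc |∑ k ∈ Finset.range K, (g (k+1) - g k)|
          ≤ ∑ k ∈ Finset.range K, |g (k+1) - g k| := Finset.abs_sum_le_sum_abs _ _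
        _ ≤ ∑ k ∈ Finset.range K, bb k :=
            Finset.sum_le_sum fun k hk => hterm k (Finset.mem_range.mp hk)
        _ = lam / 32 * ∑ k ∈ Finset.range K, (7/8 : ℝ) ^ k := by
            rw [Finset.mul_sum]
        _ ≤ lam / 32 * 8 := by
            apply mul_le_mul_of_nonneg_left (geom78_bound K)
            positivity
        _ = lam / 4 := by ring
    have hpiece3 : |(∑ j, Z j ω * freq p t j) - g K| ≤ lam / 4 := by
      have hrem := remainder_l1 p hm (K := K) ht hΔK
      have hd : (∑ j, Z j ω * freq p t j) - g K
          = ∑ j, Z j ω * (freq p t j - freq p (piA p K t) j) := by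
        simp only [hg_def]
        rw [← Finset.sum_sub_distrib]
        apply Finset.sum_congr rfl
        intro j _
        ring
      rw [hd]
      calc |∑ j, Z j ω * (freq p t j - freq p (piA p K t) j)|
          ≤ ∑ j, |Z j ω * (freq p t j - freq p (piA p K t) j)| :=
            Finset.abs_sum_le_sum_abs _ _
        _ ≤ ∑ j, (freq p (piA p K t) j - freq p t j) := by
            apply Finset.sum_le_sum
            intro j _
            rw [abs_mul]
            have hmono : freq p t j ≤ freq p (piA p K t) j :=
              freq_mono p (self_le_piA p hm ht) j
            have habs : |freq p t j - freq p (piA p K t) j|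
                = freq p (piA p K t) j - freq p t j := by
              rw [abs_of_nonpos (by linarith)]
              ring
            rw [habs]
            calc |Z j ω| * (freq p (piA p K t) j - freq p t j)
                ≤ 1 * (freq p (piA p K t) j - freq p t j) :=
                  mul_le_mul_of_nonneg_right (hωZ j) (by linarith)
              _ = freq p (piA p K t) j - freq p t j := one_mul _
        _ ≤ 1 := hrem
        _ ≤ lam / 4 := by linarith
    calc |∑ j, Z j ω * freq p t j|
        = |g 0 + (∑ k ∈ Finset.range K, (g (k+1) - g k))
            + ((∑ j, Z j ω * freq p t j) - g K)| := by rw [← hX_eq]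
      _ ≤ |g 0| + |∑ k ∈ Finset.range K, (g (k+1) - g k)|
            + |(∑ j, Z j ω * freq p t j) - g K| := abs_add_three _ _ _
      _ ≤ lam / 2 + lam / 4 + lam / 4 := add_le_add_three hpiece1 hpiece2 hpiece3
      _ = lam := by ring
  -- assemble
  have hcover : (Set.univ : Set Ω) ⊆
      {ω | ∀ t : Fin m, |∑ j, Z j ω * freq p ((t : ℕ) + 1) j|
        ≤ ((1000:ℝ) / δ) * l2norm (freq p m)} ∪ (badA ∪ badB ∪ badZ) := by
    intro ω _
    by_cases hω : ω ∈ badA ∪ badB ∪ badZ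
    · exact Or.inr hω
    · left
      intro t
      rw [hl2]
      exact hgood ω hω ((t : ℕ) + 1) (by omega)
  calc ENNReal.ofReal (1 - δ) = 1 - ENNReal.ofReal δ := by
        rw [ENNReal.ofReal_sub _ hδ0.le, ENNReal.ofReal_one]
    _ ≤ 1 - μ (badA ∪ badB ∪ badZ) := tsub_le_tsub_left hbad_le 1
    _ ≤ μ {ω | ∀ t : Fin m, |∑ j, Z j ω * freq p ((t : ℕ) + 1) j|
          ≤ ((1000:ℝ) / δ) * l2norm (freq p m)} := by
        rw [tsub_le_iff_right]
        calc (1:ℝ≥0∞) = μ Set.univ := measure_univ.symm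
          _ ≤ μ ({ω | ∀ t : Fin m, |∑ j, Z j ω * freq p ((t : ℕ) + 1) j|
                ≤ ((1000:ℝ) / δ) * l2norm (freq p m)} ∪ (badA ∪ badB ∪ badZ)) :=
              measure_mono hcover
          _ ≤ _ := measure_union_le _ _

/-- **Tameness of the Bernoulli process (BP correctness).** There is a universal constant
`C' > 0` such that for any insertion-only stream with frequency vectors `f^(t)`, any
`δ ∈ (0,1)` and i.i.d. Rademacher variables `Z_j`, with probability at least `1 − δ`
the process `X_t = ∑_j Z_j f_j^(t)` satisfies `|X_t| ≤ (C'/δ) ‖f^(m)‖₂` for all `t ∈ [m]`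
simultaneously. -/
theorem bernoulli_process_tame :
    ∃ C' : ℝ, 0 < C' ∧
      ∀ (n m : ℕ), 0 < m →
      ∀ (p : Fin m → Fin n) (δ : ℝ), 0 < δ → δ < 1 →
      ∀ (Ω : Type) [MeasurableSpace Ω] (μ : Measure Ω) [IsProbabilityMeasure μ]
        (Z : Fin n → Ω → ℝ),
        (∀ i, Measurable (Z i)) →
        iIndepFun Z μ →
        (∀ i, Measure.map (Z i) μ = radMeasure) →
        ENNReal.ofReal (1 - δ) ≤
          μ {ω | ∀ t : Fin m,
              |∑ j, Z j ω * freq p ((t : ℕ) + 1) j| ≤ (C' / δ) * l2norm (freq p m)} :=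
  ⟨1000, by norm_num, bernoulli_process_tame'⟩
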